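/- The function J̃ : ℝ → ℝ defined by J̃(v) = (1/4)v² + (1/2)(1 − sgn(v)v²)² has a unique global minimizer at v = √3/2; that is, J̃(√3/2) ≤ J̃(v) for all v ∈ ℝ, with equality only when v = √3/2. -/
import Mathlib


/-- Transformed scalar objective `J̃(v) = (1/4)v² + (1/2)(1 - sgn(v)v²)²`. -/
noncomputable def Jt (v : ℝ) : ℝ :=
  1 / 4 * v ^ 2 + 1 / 2 * (1 - Real.sign v * v ^ 2) ^ 2

lemma sqrt3_pos : (0:ℝ) < Real.sqrt 3 / 2 := by positivity

lemma Jt_val : Jt (Real.sqrt 3 / 2) = 7 / 32 := by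
  have h : Real.sign (Real.sqrt 3 / 2) = 1 := Real.sign_of_pos sqrt3_pos
  have h3 : Real.sqrt 3 ^ 2 = 3 := Real.sq_sqrt (by norm_num)
  simp only [Jt, h]
  ring_nf
  nlinarith [h3]

lemma Jt_strict (v : ℝ) (hv : v ≠ Real.sqrt 3 / 2) : 7 / 32 < Jt v := by
  rcases lt_trichotomy v 0 with h | h | h
  · have hs : Real.sign v = -1 := Real.sign_of_neg h
    simp only [Jt, hs]
    nlinarith [sq_nonneg v, sq_nonneg (v^2)]
  · subst h
    simp [Jt]
    norm_num
  · have hs : Real.sign v = 1 := Real.sign_of_pos h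
    have h3 : Real.sqrt 3 ^ 2 = 3 := Real.sq_sqrt (by norm_num)
    have hne : v ^ 2 ≠ 3 / 4 := by
      intro he
      apply hv
      have : (v - Real.sqrt 3 / 2) * (v + Real.sqrt 3 / 2) = 0 := by nlinarith
      rcases mul_eq_zero.mp this with h' | h'
      · linarith
      · nlinarith [sqrt3_pos]
    have : (0:ℝ) < (v ^ 2 - 3/4)^2 := by have := sub_ne_zero.mpr hne; positivity
    simp only [Jt, hs]
    nlinarith
  
theorem transformed_unique_global_min :
    (∀ v : ℝ, Jt (Real.sqrt 3 / 2) ≤ Jt v) ∧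
    (∀ v : ℝ, v ≠ Real.sqrt 3 / 2 → Jt (Real.sqrt 3 / 2) < Jt v) := by
  constructor
  · intro v
    by_cases hv : v = Real.sqrt 3 / 2
    · simp [hv]
    · exact le_of_lt (Jt_val ▸ Jt_strict v hv)
  · intro v hv
    exact Jt_val ▸ Jt_strict v hv
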